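/- Let N, L, K, G be positive integers, {f̃_1,...,f̃_G} ⊂ [0,1) distinct grid points, T = {f_1,...,f_K} ⊆ {f̃_1,...,f̃_G}, c_k > 0, φ_k ∈ ℂ^{1×L} with ‖φ_k‖₂ = 1 for k = 1,...,K, and Ω ⊆ {1,...,N}. Set Y^o = Σ_{k=1}^K c_k a(f_k) φ_k. Suppose that the vectors {a_Ω(f_k)}_{k=1}^K are linearly independent and that there exists V ∈ ℂ^{N×L} such that Q(f) = a(f)ᴴ V satisfies: (i) Q(f_k) = φ_k for every f_k ∈ T; (ii) ‖Q(f̃_g)‖₂ < 1 for every grid point f̃_g ∉ T; and (iii) the j-th row of V is zero for every j ∉ Ω. Then the ℓ_{2,1} minimization problem min_{(s̃_g)_{g=1}^G, s̃_g ∈ ℂ^{1×L}} Σ_{g=1}^G ‖s̃_g‖₂ subject to Σ_{g=1}^G a_Ω(f̃_g) s̃_g = Y^o_Ω has as its unique solution s̃_g = c_k φ_k whenever f̃_g = f_k ∈ T and s̃_g = 0 otherwise. -/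

import Mathlib

open MeasureTheory ProbabilityTheory Finset

noncomputable section

/-- Euclidean norm of a finite complex vector. -/
def vnorm {ι : Type*} [Fintype ι] (x : ι → ℂ) : ℝ :=
  Real.sqrt (∑ i, Complex.normSq (x i))

/-- The atom `a(f) = (1, e^{2πif}, …, e^{2πi(N-1)f})`. -/
def atom (N : ℕ) (f : ℝ) : Fin N → ℂ :=
  fun j => Complex.exp (2 * Real.pi * Complex.I * f * (j : ℕ))

/-- Wrap-around distance on the unit circle `[0,1)`. -/
def wrapDist (x y : ℝ) : ℝ := min |x - y| (1 - |x - y|)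

/-- Coefficients of the squared Fejér kernel. -/
def gcoef (n : ℕ) (j : ℤ) : ℝ :=
  (1 / ((n : ℝ) + 1)) *
    ∑ k ∈ Finset.Icc (max (j - (n : ℤ) - 1) (-(n : ℤ) - 1)) (min (j + (n : ℤ) + 1) ((n : ℤ) + 1)),
      (1 - |(k : ℝ)| / ((n : ℝ) + 1)) * (1 - |((j - k : ℤ) : ℝ)| / ((n : ℝ) + 1))

/-- The partially observed squared Fejér kernel, with selection `sel`. -/
def fejerSel (n : ℕ) (sel : ℤ → Bool) (f : ℝ) : ℂ :=
  ∑ j ∈ Finset.Icc (-(2 * (n : ℤ))) (2 * (n : ℤ)),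
    (if sel j then (1 : ℂ) else 0) * (gcoef n j : ℂ) *
      Complex.exp (-(2 * Real.pi * Complex.I) * (j : ℤ) * f)

/-- The squared Fejér kernel (as a trigonometric polynomial). -/
def fejer (n : ℕ) : ℝ → ℂ := fejerSel n fun _ => true

/-- `l`-th derivative of the squared Fejér kernel. -/
def fejerD (n : ℕ) (l : ℕ) (f : ℝ) : ℂ := iteratedDeriv l (fejer n) f

/-- `l`-th derivative of the partially observed squared Fejér kernel. -/
def fejerSelD (n : ℕ) (sel : ℤ → Bool) (l : ℕ) (f : ℝ) : ℂ :=
  iteratedDeriv l (fejerSel n sel) f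

/-- The constant `c₀ = √(4π²n(n+2)/3) = √|K''(0)|`. -/
def c0 (n : ℕ) : ℝ := Real.sqrt (4 * Real.pi ^ 2 * n * (n + 2) / 3)

/-- The `2K × 2K` matrix built from a kernel-derivative function `κ l f`. -/
def Dgen {K : ℕ} (freq : Fin K → ℝ) (n : ℕ) (κ : ℕ → ℝ → ℂ) :
    Matrix (Fin K ⊕ Fin K) (Fin K ⊕ Fin K) ℂ :=
  fun r s =>
    match r, s with
    | .inl j, .inl k => κ 0 (freq j - freq k)
    | .inl j, .inr k => ((c0 n : ℝ) : ℂ)⁻¹ * κ 1 (freq j - freq k)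
    | .inr j, .inl k => -((c0 n : ℝ) : ℂ)⁻¹ * κ 1 (freq j - freq k)
    | .inr j, .inr k => -(((c0 n : ℝ) : ℂ)⁻¹) ^ 2 * κ 2 (freq j - freq k)

/-- The deterministic matrix `D`. -/
def Dmat {K : ℕ} (n : ℕ) (freq : Fin K → ℝ) : Matrix (Fin K ⊕ Fin K) (Fin K ⊕ Fin K) ℂ :=
  Dgen freq n (fejerD n)

/-- The random (partially observed) matrix `D̄`. -/
def DmatBar {K : ℕ} (n : ℕ) (freq : Fin K → ℝ) (sel : ℤ → Bool) :
    Matrix (Fin K ⊕ Fin K) (Fin K ⊕ Fin K) ℂ :=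
  Dgen freq n (fejerSelD n sel)

/-- Spectral norm (ℓ² operator norm) of a square complex matrix. -/
def specNorm {m : Type*} [Fintype m] [DecidableEq m] (A : Matrix m m ℂ) : ℝ :=
  ‖Matrix.toEuclideanCLM (𝕜 := ℂ) A‖

/-- First `K` columns of `D⁻¹`. -/
def Lcols {K : ℕ} (D : Matrix (Fin K ⊕ Fin K) (Fin K ⊕ Fin K) ℂ) :
    Matrix (Fin K ⊕ Fin K) (Fin K) ℂ :=
  fun i k => D⁻¹ i (Sum.inl k)

/-- The vector `v_l(f)` built from a kernel-derivative function `κ`. -/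
def vgen {K : ℕ} (freq : Fin K → ℝ) (n : ℕ) (κ : ℕ → ℝ → ℂ) (l : ℕ) (f : ℝ) :
    Fin K ⊕ Fin K → ℂ :=
  Sum.elim (fun k => ((((c0 n) ^ l)⁻¹ : ℝ) : ℂ) * (starRingEnd ℂ) (κ l (f - freq k)))
    (fun k => ((((c0 n) ^ (l + 1))⁻¹ : ℝ) : ℂ) * (starRingEnd ℂ) (κ (l + 1) (f - freq k)))

/-- The deterministic vector `v_l(f)`. -/
def vvec {K : ℕ} (n : ℕ) (freq : Fin K → ℝ) (l : ℕ) (f : ℝ) : Fin K ⊕ Fin K → ℂ :=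
  vgen freq n (fejerD n) l f

/-- The random vector `v̄_l(f)`. -/
def vvecBar {K : ℕ} (n : ℕ) (freq : Fin K → ℝ) (sel : ℤ → Bool) (l : ℕ) (f : ℝ) :
    Fin K ⊕ Fin K → ℂ :=
  vgen freq n (fejerSelD n sel) l f

/-- `Lᴴ x` for a `2K × K` matrix `L` and a `2K`-vector `x`. -/
def applyH {K : ℕ} (L : Matrix (Fin K ⊕ Fin K) (Fin K) ℂ) (x : Fin K ⊕ Fin K → ℂ) :
    Fin K → ℂ :=
  fun k => ∑ i, (starRingEnd ℂ) (L i k) * x i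

/-- The row vector `xᴴ L Φ ∈ ℂ^{1×L}`. -/
def quadForm {K L : ℕ} (x : Fin K ⊕ Fin K → ℂ) (Lm : Matrix (Fin K ⊕ Fin K) (Fin K) ℂ)
    (Φ : Fin K → Fin L → ℂ) : Fin L → ℂ :=
  fun a => ∑ k, (∑ i, (starRingEnd ℂ) (x i) * Lm i k) * Φ k a

/-- A probability measure on `ℂ^L` is the uniform distribution on the unit sphere iff it is
supported on the unit sphere and invariant under every unitary transformation. -/
def IsUniformOnSphere (L : ℕ) (ν : Measure (Fin L → ℂ)) : Prop :=
  IsProbabilityMeasure ν ∧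
  ν {x : Fin L → ℂ | ∑ i, Complex.normSq (x i) = 1}ᶜ = 0 ∧
  ∀ U : Matrix (Fin L) (Fin L) ℂ, U ∈ Matrix.unitaryGroup (Fin L) ℂ →
    ν.map (fun x i => ∑ j, U i j * x j) = ν

end


section AuxLemmas

open Finset

lemma vnorm_eq_norm' {ι : Type*} [Fintype ι] (x : ι → ℂ) :
    vnorm x = ‖(WithLp.equiv 2 (ι → ℂ)).symm x‖ := by
  rw [vnorm, EuclideanSpace.norm_eq]
  congr 1
  refine Finset.sum_congr rfl fun i _ => ?_
  simp [Complex.normSq_eq_norm_sq]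

lemma vnorm_nonneg' {ι : Type*} [Fintype ι] (x : ι → ℂ) : 0 ≤ vnorm x :=
  Real.sqrt_nonneg _

lemma vnorm_zero_imp' {ι : Type*} [Fintype ι] {x : ι → ℂ} (h : vnorm x = 0) : x = 0 := by
  have h0 : (0:ℝ) ≤ ∑ i, Complex.normSq (x i) :=
    Finset.sum_nonneg fun i _ => Complex.normSq_nonneg _
  have hsum : ∑ i, Complex.normSq (x i) = 0 := (Real.sqrt_eq_zero h0).mp h
  funext i
  exact Complex.normSq_eq_zero.mp
    ((Finset.sum_eq_zero_iff_of_nonneg (fun i _ => Complex.normSq_nonneg (x i))).mp hsum i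
      (mem_univ i))

lemma vnorm_cs' {ι : Type*} [Fintype ι] (x y : ι → ℂ) :
    ‖∑ i, (starRingEnd ℂ) (x i) * y i‖ ≤ vnorm x * vnorm y := by
  have h := norm_inner_le_norm (𝕜 := ℂ) ((WithLp.equiv 2 (ι → ℂ)).symm x)
    ((WithLp.equiv 2 (ι → ℂ)).symm y)
  rw [vnorm_eq_norm', vnorm_eq_norm']
  simpa [PiLp.inner_apply, RCLike.inner_apply, mul_comm] using h

end AuxLemmas

/-- Dual certificate proposition for `ℓ_{2,1}` minimization on a grid: under the dual polynomial
conditions, the `ℓ_{2,1}` minimization problem has the true coefficients as its unique solution. -/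
theorem dual_certificate_l21_recovery (N L K G : ℕ) (hN : 0 < N) (hL : 0 < L) (hK : 0 < K)
    (hG : 0 < G)
    (fg : Fin G → ℝ) (hfg : ∀ g, fg g ∈ Set.Ico (0 : ℝ) 1) (hfginj : Function.Injective fg)
    (f : Fin K → ℝ) (ι : Fin K → Fin G) (hιinj : Function.Injective ι)
    (hfι : ∀ k, fg (ι k) = f k)
    (c : Fin K → ℝ) (hc : ∀ k, 0 < c k)
    (φ : Fin K → Fin L → ℂ) (hφ : ∀ k, ∑ l, Complex.normSq (φ k l) = 1)
    (Ω : Finset (Fin N))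
    (hLI : LinearIndependent ℂ fun k : Fin K => fun j : {j : Fin N // j ∈ Ω} =>
      atom N (f k) (j : Fin N))
    (V : Matrix (Fin N) (Fin L) ℂ)
    (hQeq : ∀ k, (fun l => ∑ j, (starRingEnd ℂ) (atom N (f k) j) * V j l) = φ k)
    (hQlt : ∀ g : Fin G, (¬ ∃ k, ι k = g) →
      vnorm (fun l => ∑ j, (starRingEnd ℂ) (atom N (fg g) j) * V j l) < 1)
    (hVz : ∀ j : Fin N, j ∉ Ω → ∀ l, V j l = 0) :
    (∀ j ∈ Ω, ∀ l,
      (∑ g, atom N (fg g) j * (∑ k, if ι k = g then (c k : ℂ) * φ k l else 0)) =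
        ∑ k, (c k : ℂ) * atom N (f k) j * φ k l) ∧
    (∀ s : Fin G → Fin L → ℂ,
      (∀ j ∈ Ω, ∀ l, (∑ g, atom N (fg g) j * s g l) = ∑ k, (c k : ℂ) * atom N (f k) j * φ k l) →
      s ≠ (fun g l => ∑ k, if ι k = g then (c k : ℂ) * φ k l else 0) →
      (∑ g, vnorm (fun l => ∑ k, if ι k = g then (c k : ℂ) * φ k l else 0)) <
        ∑ g, vnorm (s g)) := by
  classical
  -- the claimed solution
  have feas : ∀ (j : Fin N) (l : Fin L),
      (∑ g, atom N (fg g) j * (∑ k, if ι k = g then (c k : ℂ) * φ k l else 0)) =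
        ∑ k, (c k : ℂ) * atom N (f k) j * φ k l := by
    intro j l
    calc ∑ g, atom N (fg g) j * (∑ k, if ι k = g then (c k : ℂ) * φ k l else 0)
        = ∑ g, ∑ k, (if ι k = g then atom N (fg g) j * ((c k : ℂ) * φ k l) else 0) := by
          refine Finset.sum_congr rfl fun g _ => ?_
          rw [Finset.mul_sum]
          exact Finset.sum_congr rfl fun k _ => by split <;> simp
      _ = ∑ k, ∑ g, (if ι k = g then atom N (fg g) j * ((c k : ℂ) * φ k l) else 0) :=
          Finset.sum_comm
      _ = ∑ k, atom N (fg (ι k)) j * ((c k : ℂ) * φ k l) := by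
          refine Finset.sum_congr rfl fun k _ => ?_
          simp
      _ = ∑ k, (c k : ℂ) * atom N (f k) j * φ k l := by
          refine Finset.sum_congr rfl fun k _ => ?_
          rw [hfι]; ring
  refine ⟨fun j _ l => feas j l, ?_⟩
  intro s hs hne
  -- the dual polynomial evaluated at the grid points
  set Q : Fin G → Fin L → ℂ := fun g l => ∑ j, (starRingEnd ℂ) (atom N (fg g) j) * V j l
    with hQdef
  have hQι : ∀ k, Q (ι k) = φ k := by
    intro k
    funext l
    have := congrFun (hQeq k) l
    simpa [hQdef, hfι k] using this
  have hvφ : ∀ k, vnorm (φ k) = 1 := by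
    intro k
    rw [vnorm, hφ k, Real.sqrt_one]
  have hQle : ∀ g, vnorm (Q g) ≤ 1 := by
    intro g
    by_cases h : ∃ k, ι k = g
    · obtain ⟨k, rfl⟩ := h
      rw [hQι k, hvφ k]
    · exact le_of_lt (hQlt g h)
  -- conjugate of the dual polynomial identity
  have hQconj : ∀ k l,
      ∑ j, atom N (f k) j * (starRingEnd ℂ) (V j l) = (starRingEnd ℂ) (φ k l) := by
    intro k l
    have h1 := congrFun (hQeq k) l
    calc ∑ j, atom N (f k) j * (starRingEnd ℂ) (V j l)
        = (starRingEnd ℂ) (∑ j, (starRingEnd ℂ) (atom N (f k) j) * V j l) := by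
          rw [map_sum]
          refine Finset.sum_congr rfl fun j _ => ?_
          rw [map_mul, Complex.conj_conj]
      _ = (starRingEnd ℂ) (φ k l) := by rw [h1]
  -- key sum computation
  have hkey : ∀ (j : Fin N) (l : Fin L),
      (starRingEnd ℂ) (V j l) * (∑ g, atom N (fg g) j * s g l) =
      (starRingEnd ℂ) (V j l) * (∑ k, (c k : ℂ) * atom N (f k) j * φ k l) := by
    intro j l
    by_cases hj : j ∈ Ω
    · rw [hs j hj l]
    · simp [hVz j hj l]
  have hconjQ : ∀ g l, (starRingEnd ℂ) (Q g l) =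
      ∑ j, atom N (fg g) j * (starRingEnd ℂ) (V j l) := by
    intro g l
    rw [hQdef]
    rw [map_sum]
    refine Finset.sum_congr rfl fun j _ => ?_
    rw [map_mul, Complex.conj_conj]
  have hdsum : (∑ g, ∑ l, (starRingEnd ℂ) (Q g l) * s g l) = ((∑ k, c k : ℝ) : ℂ) := by
    calc ∑ g, ∑ l, (starRingEnd ℂ) (Q g l) * s g l
        = ∑ g, ∑ l, ∑ j, (starRingEnd ℂ) (V j l) * (atom N (fg g) j * s g l) := by
          refine Finset.sum_congr rfl fun g _ => Finset.sum_congr rfl fun l _ => ?_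
          rw [hconjQ, Finset.sum_mul]
          exact Finset.sum_congr rfl fun j _ => by ring
      _ = ∑ l, ∑ g, ∑ j, (starRingEnd ℂ) (V j l) * (atom N (fg g) j * s g l) :=
          Finset.sum_comm
      _ = ∑ l, ∑ j, ∑ g, (starRingEnd ℂ) (V j l) * (atom N (fg g) j * s g l) :=
          Finset.sum_congr rfl fun l _ => Finset.sum_comm
      _ = ∑ j, ∑ l, ∑ g, (starRingEnd ℂ) (V j l) * (atom N (fg g) j * s g l) :=
          Finset.sum_comm
      _ = ∑ j, ∑ l, (starRingEnd ℂ) (V j l) * (∑ g, atom N (fg g) j * s g l) := by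
          refine Finset.sum_congr rfl fun j _ => Finset.sum_congr rfl fun l _ => ?_
          rw [Finset.mul_sum]
      _ = ∑ j, ∑ l, (starRingEnd ℂ) (V j l) * (∑ k, (c k : ℂ) * atom N (f k) j * φ k l) := by
          refine Finset.sum_congr rfl fun j _ => Finset.sum_congr rfl fun l _ => hkey j l
      _ = ∑ j, ∑ l, ∑ k, (starRingEnd ℂ) (V j l) * ((c k : ℂ) * atom N (f k) j * φ k l) := by
          refine Finset.sum_congr rfl fun j _ => Finset.sum_congr rfl fun l _ => ?_
          rw [Finset.mul_sum]
      _ = ∑ l, ∑ j, ∑ k, (starRingEnd ℂ) (V j l) * ((c k : ℂ) * atom N (f k) j * φ k l) :=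
          Finset.sum_comm
      _ = ∑ l, ∑ k, ∑ j, (starRingEnd ℂ) (V j l) * ((c k : ℂ) * atom N (f k) j * φ k l) :=
          Finset.sum_congr rfl fun l _ => Finset.sum_comm
      _ = ∑ k, ∑ l, ∑ j, (starRingEnd ℂ) (V j l) * ((c k : ℂ) * atom N (f k) j * φ k l) :=
          Finset.sum_comm
      _ = ∑ k, ∑ l, (∑ j, atom N (f k) j * (starRingEnd ℂ) (V j l)) * ((c k : ℂ) * φ k l) := by
          refine Finset.sum_congr rfl fun k _ => Finset.sum_congr rfl fun l _ => ?_
          rw [Finset.sum_mul]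
          exact Finset.sum_congr rfl fun j _ => by ring
      _ = ∑ k, ∑ l, (starRingEnd ℂ) (φ k l) * ((c k : ℂ) * φ k l) := by
          refine Finset.sum_congr rfl fun k _ => Finset.sum_congr rfl fun l _ => ?_
          rw [hQconj]
      _ = ((∑ k, c k : ℝ) : ℂ) := by
          push_cast
          refine Finset.sum_congr rfl fun k _ => ?_
          have h2 : ∑ l, (starRingEnd ℂ) (φ k l) * ((c k : ℂ) * φ k l)
              = (c k : ℂ) * ∑ l, ((Complex.normSq (φ k l) : ℝ) : ℂ) := by
            rw [Finset.mul_sum]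
            refine Finset.sum_congr rfl fun l _ => ?_
            rw [Complex.normSq_eq_conj_mul_self]
            ring
          rw [h2]
          norm_cast
          rw [hφ k, mul_one]
  -- sum of norms of the claimed solution
  have hstarval : ∀ g, vnorm (fun l => ∑ k, if ι k = g then (c k : ℂ) * φ k l else 0) =
      ∑ k, if ι k = g then c k else 0 := by
    intro g
    by_cases h : ∃ k, ι k = g
    · obtain ⟨k0, rfl⟩ := h
      have h1 : (fun l => ∑ k, if ι k = ι k0 then (c k : ℂ) * φ k l else 0) =
          fun l => (c k0 : ℂ) * φ k0 l := by
        funext l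
        rw [Finset.sum_eq_single k0]
        · simp
        · intro b _ hb
          rw [if_neg (fun hc => hb (hιinj hc))]
        · intro hb; exact absurd (mem_univ k0) hb
      rw [h1]
      have h2 : (∑ k, if ι k = ι k0 then c k else 0) = c k0 := by
        rw [Finset.sum_eq_single k0]
        · simp
        · intro b _ hb
          rw [if_neg (fun hc => hb (hιinj hc))]
        · intro hb; exact absurd (mem_univ k0) hb
      rw [h2, vnorm]
      have : ∀ l, Complex.normSq ((c k0 : ℂ) * φ k0 l) = (c k0)^2 * Complex.normSq (φ k0 l) := by
        intro l
        rw [Complex.normSq_mul, Complex.normSq_ofReal]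
        ring
      simp only [this]
      rw [← Finset.mul_sum, hφ k0, mul_one, Real.sqrt_sq (le_of_lt (hc k0))]
    · have h1 : (fun l => ∑ k, if ι k = g then (c k : ℂ) * φ k l else 0) = fun _ => 0 := by
        funext l
        refine Finset.sum_eq_zero fun k _ => ?_
        rw [if_neg (fun hc => h ⟨k, hc⟩)]
      have h2 : (∑ k, if ι k = g then c k else 0) = 0 :=
        Finset.sum_eq_zero fun k _ => by rw [if_neg (fun hc => h ⟨k, hc⟩)]
      rw [h1, h2, vnorm]
      simp
  have hstarsum : (∑ g, vnorm (fun l => ∑ k, if ι k = g then (c k : ℂ) * φ k l else 0)) =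
      ∑ k, c k := by
    calc ∑ g, vnorm (fun l => ∑ k, if ι k = g then (c k : ℂ) * φ k l else 0)
        = ∑ g, ∑ k, if ι k = g then c k else 0 :=
          Finset.sum_congr rfl fun g _ => hstarval g
      _ = ∑ k, ∑ g, if ι k = g then c k else 0 := Finset.sum_comm
      _ = ∑ k, c k := by
          refine Finset.sum_congr rfl fun k _ => ?_
          simp
  -- the chain of inequalities
  have hchain1 : (∑ k, c k) ≤ ∑ g, vnorm (Q g) * vnorm (s g) := by
    have h0 : (∑ k, c k) = ‖((∑ k, c k : ℝ) : ℂ)‖ := by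
      rw [Complex.norm_real]
      exact (abs_of_nonneg (Finset.sum_nonneg fun k _ => le_of_lt (hc k))).symm
    rw [h0, ← hdsum]
    calc ‖∑ g, ∑ l, (starRingEnd ℂ) (Q g l) * s g l‖
        ≤ ∑ g, ‖∑ l, (starRingEnd ℂ) (Q g l) * s g l‖ := norm_sum_le _ _
      _ ≤ ∑ g, vnorm (Q g) * vnorm (s g) :=
          Finset.sum_le_sum fun g _ => vnorm_cs' (Q g) (s g)
  have hterm : ∀ g, vnorm (Q g) * vnorm (s g) ≤ vnorm (s g) := fun g => by
    calc vnorm (Q g) * vnorm (s g) ≤ 1 * vnorm (s g) :=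
          mul_le_mul_of_nonneg_right (hQle g) (vnorm_nonneg' _)
      _ = vnorm (s g) := one_mul _
  have hchain2 : (∑ g, vnorm (Q g) * vnorm (s g)) ≤ ∑ g, vnorm (s g) :=
    Finset.sum_le_sum fun g _ => hterm g
  rw [hstarsum]
  by_contra hcon
  push_neg at hcon
  -- equality throughout
  have heq : (∑ g, vnorm (Q g) * vnorm (s g)) = ∑ g, vnorm (s g) :=
    le_antisymm hchain2 (le_trans (le_trans hcon hchain1) (le_refl _))
  -- s vanishes off the support
  have soff : ∀ g, (¬ ∃ k, ι k = g) → s g = 0 := by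
    intro g hg
    by_contra hsg
    have hpos : 0 < vnorm (s g) :=
      lt_of_le_of_ne (vnorm_nonneg' _) (fun h => hsg (vnorm_zero_imp' h.symm))
    have hlt : vnorm (Q g) * vnorm (s g) < vnorm (s g) := by
      calc vnorm (Q g) * vnorm (s g) < 1 * vnorm (s g) :=
            mul_lt_mul_of_pos_right (hQlt g hg) hpos
        _ = vnorm (s g) := one_mul _
    have : (∑ g, vnorm (Q g) * vnorm (s g)) < ∑ g, vnorm (s g) :=
      Finset.sum_lt_sum (fun i _ => hterm i) ⟨g, mem_univ g, hlt⟩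
    exact absurd heq (ne_of_lt this)
  -- use linear independence to show s agrees with the claimed solution on the support
  have hskl : ∀ l k, s (ι k) l = (c k : ℂ) * φ k l := by
    intro l
    have hform : ∀ j : {j : Fin N // j ∈ Ω},
        ∑ k, atom N (f k) (j : Fin N) * s (ι k) l =
          ∑ k, (c k : ℂ) * atom N (f k) (j : Fin N) * φ k l := by
      intro j
      rw [← hs (j : Fin N) j.2 l]
      have himg : ∑ g ∈ Finset.univ.image ι, atom N (fg g) (j : Fin N) * s g l =
          ∑ k, atom N (fg (ι k)) (j : Fin N) * s (ι k) l :=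
        Finset.sum_image (fun a _ b _ h => hιinj h)
      have hfull : ∑ g, atom N (fg g) (j : Fin N) * s g l =
          ∑ g ∈ Finset.univ.image ι, atom N (fg g) (j : Fin N) * s g l := by
        symm
        apply Finset.sum_subset (Finset.subset_univ _)
        intro g _ hg
        have hg' : ¬ ∃ k, ι k = g := by
          intro ⟨k, hk⟩
          exact hg (Finset.mem_image.mpr ⟨k, mem_univ k, hk⟩)
        rw [soff g hg']
        simp
      rw [hfull, himg]
      exact Finset.sum_congr rfl fun k _ => by rw [hfι]
    intro k
    have hzero : (∑ k, (s (ι k) l - (c k : ℂ) * φ k l) •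
        (fun j : {j : Fin N // j ∈ Ω} => atom N (f k) (j : Fin N))) = 0 := by
      funext j
      have h1 := hform j
      simp only [Finset.sum_apply, Pi.smul_apply, smul_eq_mul, Pi.zero_apply]
      have : ∑ x, (s (ι x) l - (c x : ℂ) * φ x l) * atom N (f x) (j : Fin N) =
          (∑ x, atom N (f x) (j : Fin N) * s (ι x) l) -
            ∑ x, (c x : ℂ) * atom N (f x) (j : Fin N) * φ x l := by
        rw [← Finset.sum_sub_distrib]
        exact Finset.sum_congr rfl fun x _ => by ring
      rw [this, h1, sub_self]
    have := Fintype.linearIndependent_iff.mp hLI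
      (fun k => s (ι k) l - (c k : ℂ) * φ k l) hzero k
    exact sub_eq_zero.mp this
  -- conclude s = the claimed solution, contradiction
  apply hne
  funext g l
  by_cases h : ∃ k, ι k = g
  · obtain ⟨k0, rfl⟩ := h
    have h2 : (∑ k, if ι k = ι k0 then (c k : ℂ) * φ k l else 0) = (c k0 : ℂ) * φ k0 l := by
      rw [Finset.sum_eq_single k0]
      · simp
      · intro b _ hb
        rw [if_neg (fun hc' => hb (hιinj hc'))]
      · intro hb; exact absurd (mem_univ k0) hb
    rw [h2]
    exact hskl l k0
  · have h2 : (∑ k, if ι k = g then (c k : ℂ) * φ k l else 0) = 0 :=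
      Finset.sum_eq_zero fun k _ => by rw [if_neg (fun hc' => h ⟨k, hc'⟩)]
    rw [h2]
    rw [soff g h]
    simp
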